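/- Let (Ω, 𝒜, μ) be a probability space, S_X, S_Y, S_C countable types, T ≥ 1 a natural number, and random variables X₀, …, X_T : Ω → S_X, Y₀, …, Y_T : Ω → S_Y, C : Ω → S_C. Assume the pair process (X_t, Y_t) is a Markov chain conditionally on C: for every t < T, every c ∈ S_C, and all values with μ(⋂_{k=0}^{t} {X_k = x_k, Y_k = y_k} ∩ {C = c}) > 0, one has μ[{X_{t+1} = x_{t+1}, Y_{t+1} = y_{t+1}} | ⋂_{k=0}^{t} {X_k = x_k, Y_k = y_k} ∩ {C = c}] = μ[{X_{t+1} = x_{t+1}, Y_{t+1} = y_{t+1}} | {X_t = x_t} ∩ {Y_t = y_t} ∩ {C = c}]. Then for all trajectories with μ(⋂_{t=0}^{T} {X_t = x_t, Y_t = y_t} ∩ {C = c}) > 0: μ[⋂_{t=0}^{T−1} {X_t = x_t, Y_t = y_t} | {X_T = x_T} ∩ {Y_T = y_T} ∩ {C = c}] = ∏_{t=1}^{T} μ[{X_{t−1} = x_{t−1}} | {X_t = x_t} ∩ {Y_t = y_t} ∩ {C = c}] · μ[{Y_{t−1} = y_{t−1}} | {X_{t−1} = x_{t−1}} ∩ {X_t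 = x_t} ∩ {Y_t = y_t} ∩ {C = c}]. -/

import Mathlib

open MeasureTheory ProbabilityTheory

private lemma reverse_chain_aux {Ω : Type*} [MeasurableSpace Ω] (μ : Measure Ω)
    [IsProbabilityMeasure μ] (T : ℕ) (A : ℕ → Set Ω) (Ec : Set Ω)
    (hA : ∀ t, MeasurableSet (A t)) (hEc : MeasurableSet Ec)
    (hMarkov : ∀ t, t < T →
      0 < μ ((⋂ k ∈ Finset.range (t + 1), A k) ∩ Ec) →
      μ[|(⋂ k ∈ Finset.range (t + 1), A k) ∩ Ec] (A (t + 1))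
        = μ[|A t ∩ Ec] (A (t + 1)))
    (hpos : 0 < μ ((⋂ t ∈ Finset.range (T + 1), A t) ∩ Ec)) :
    μ[|A T ∩ Ec] (⋂ t ∈ Finset.range T, A t)
      = ∏ t ∈ Finset.Icc 1 T, μ[|A t ∩ Ec] (A (t - 1)) := by
  set B : ℕ → Set Ω := fun n => (⋂ k ∈ Finset.range (n + 1), A k) ∩ Ec with hB
  have hposB : 0 < μ (B T) := hpos
  have hBm : ∀ n, MeasurableSet (B n) := fun n =>
    (MeasurableSet.biInter (Finset.range (n + 1)).countable_toSet fun k _ => hA k).inter hEc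
  have hBsub : ∀ n, n ≤ T → B T ⊆ B n := by
    intro n hn ω hω
    simp only [hB, Set.mem_inter_iff, Set.mem_iInter, Finset.mem_range] at hω ⊢
    exact ⟨fun k hk => hω.1 k (by omega), hω.2⟩
  have hBpos : ∀ n, n ≤ T → 0 < μ (B n) := fun n hn =>
    lt_of_lt_of_le hposB (measure_mono (hBsub n hn))
  have hsubA : ∀ n, n ≤ T → B T ⊆ A n := by
    intro n hn ω hω
    simp only [hB, Set.mem_inter_iff, Set.mem_iInter, Finset.mem_range] at hω
    exact hω.1 n (by omega)
  have hApos : ∀ n, n ≤ T → 0 < μ (A n ∩ Ec) := fun n hn =>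
    lt_of_lt_of_le hposB (measure_mono (Set.subset_inter (hsubA n hn) Set.inter_subset_right))
  have hJpos : ∀ t, 1 ≤ t → t ≤ T → 0 < μ (A (t - 1) ∩ (A t ∩ Ec)) := by
    intro t h1 h2
    refine lt_of_lt_of_le hposB (measure_mono ?_)
    exact Set.subset_inter (hsubA (t - 1) (by omega))
      (Set.subset_inter (hsubA t h2) Set.inter_subset_right)
  have key : ∀ n, n ≤ T →
      (μ (B n)).toReal * ∏ t ∈ Finset.Icc 1 n, (μ (A t ∩ Ec)).toReal
        = (μ (A n ∩ Ec)).toReal * ∏ t ∈ Finset.Icc 1 n, (μ (A (t - 1) ∩ (A t ∩ Ec))).toReal := by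
    intro n
    induction n with
    | zero =>
      intro _
      have h0 : B 0 = A 0 ∩ Ec := by
        simp [hB]
      simp [h0]
    | succ m ih =>
      intro hmT
      have hm' : μ[|B m] (A (m + 1)) = μ[|A m ∩ Ec] (A (m + 1)) :=
        hMarkov m (by omega) (hBpos m (by omega))
      have hset : B m ∩ A (m + 1) = B (m + 1) := by
        ext ω
        simp only [hB, Set.mem_inter_iff, Set.mem_iInter, Finset.mem_range]
        constructor
        · rintro ⟨⟨h1, h2⟩, h3⟩
          refine ⟨fun k hk => ?_, h2⟩
          rcases Nat.lt_succ_iff_lt_or_eq.mp hk with h | h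
          · exact h1 k h
          · exact h ▸ h3
        · rintro ⟨h1, h2⟩
          exact ⟨⟨fun k hk => h1 k (by omega), h2⟩, h1 (m + 1) (by omega)⟩
      have hJset : A m ∩ Ec ∩ A (m + 1) = A (m + 1 - 1) ∩ (A (m + 1) ∩ Ec) := by
        simp only [Nat.add_sub_cancel]
        ext ω
        simp only [Set.mem_inter_iff]
        tauto
      have hm2 : (μ (B m))⁻¹ * μ (B (m + 1))
          = (μ (A m ∩ Ec))⁻¹ * μ (A (m + 1 - 1) ∩ (A (m + 1) ∩ Ec)) := by
        rw [cond_apply (hBm m), cond_apply ((hA m).inter hEc), hset, hJset] at hm'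
        exact hm'
      have hm3 := congrArg ENNReal.toReal hm2
      simp only [ENNReal.toReal_mul, ENNReal.toReal_inv] at hm3
      have hb : 0 < (μ (B m)).toReal :=
        ENNReal.toReal_pos (hBpos m (by omega)).ne' (measure_ne_top _ _)
      have ha : 0 < (μ (A m ∩ Ec)).toReal :=
        ENNReal.toReal_pos (hApos m (by omega)).ne' (measure_ne_top _ _)
      have E1 : (μ (B (m + 1))).toReal * (μ (A m ∩ Ec)).toReal
          = (μ (A m ∩ (A (m + 1) ∩ Ec))).toReal * (μ (B m)).toReal := by
        field_simp at hm3
        simp only [Nat.add_sub_cancel] at hm3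
        linarith
      have ih' := ih (by omega)
      rw [Finset.prod_Icc_succ_top (by omega : 1 ≤ m + 1),
        Finset.prod_Icc_succ_top (by omega : 1 ≤ m + 1)]
      simp only [Nat.add_sub_cancel]
      apply mul_left_cancel₀ (ne_of_gt ha)
      linear_combination
        ((∏ t ∈ Finset.Icc 1 m, (μ (A t ∩ Ec)).toReal) * (μ (A (m + 1) ∩ Ec)).toReal) * E1
        + ((μ (A m ∩ (A (m + 1) ∩ Ec))).toReal * (μ (A (m + 1) ∩ Ec)).toReal) * ih'
  have hfin1 : μ[|A T ∩ Ec] (⋂ t ∈ Finset.range T, A t) ≠ ⊤ := by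
    rw [cond_apply ((hA T).inter hEc)]
    exact ENNReal.mul_ne_top (ENNReal.inv_ne_top.mpr (hApos T le_rfl).ne') (measure_ne_top _ _)
  have hfin2 : (∏ t ∈ Finset.Icc 1 T, μ[|A t ∩ Ec] (A (t - 1))) ≠ ⊤ := by
    refine ENNReal.prod_ne_top fun t ht => ?_
    rw [cond_apply ((hA t).inter hEc)]
    exact ENNReal.mul_ne_top
      (ENNReal.inv_ne_top.mpr (hApos t (Finset.mem_Icc.mp ht).2).ne') (measure_ne_top _ _)
  rw [← ENNReal.toReal_eq_toReal_iff' hfin1 hfin2, ENNReal.toReal_prod]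
  have hsetL : A T ∩ Ec ∩ ⋂ t ∈ Finset.range T, A t = B T := by
    ext ω
    simp only [hB, Set.mem_inter_iff, Set.mem_iInter, Finset.mem_range]
    constructor
    · rintro ⟨⟨h1, h2⟩, h3⟩
      refine ⟨fun k hk => ?_, h2⟩
      rcases Nat.lt_succ_iff_lt_or_eq.mp hk with h | h
      · exact h3 k h
      · exact h ▸ h1
    · rintro ⟨h1, h2⟩
      exact ⟨⟨h1 T (by omega), h2⟩, fun k hk => h1 k (by omega)⟩
  rw [cond_apply ((hA T).inter hEc), hsetL, ENNReal.toReal_mul, ENNReal.toReal_inv]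
  have hfac : ∀ t ∈ Finset.Icc 1 T, (μ[|A t ∩ Ec] (A (t - 1))).toReal
      = (μ (A (t - 1) ∩ (A t ∩ Ec))).toReal / (μ (A t ∩ Ec)).toReal := by
    intro t ht
    rw [cond_apply ((hA t).inter hEc), Set.inter_comm (A t ∩ Ec) (A (t - 1)),
      ENNReal.toReal_mul, ENNReal.toReal_inv]
    ring
  rw [Finset.prod_congr rfl hfac, Finset.prod_div_distrib]
  have haT : 0 < (μ (A T ∩ Ec)).toReal :=
    ENNReal.toReal_pos (hApos T le_rfl).ne' (measure_ne_top _ _)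
  have hP : 0 < ∏ t ∈ Finset.Icc 1 T, (μ (A t ∩ Ec)).toReal :=
    Finset.prod_pos fun t ht =>
      ENNReal.toReal_pos (hApos t (Finset.mem_Icc.mp ht).2).ne' (measure_ne_top _ _)
  have hk := key T le_rfl
  field_simp
  linarith [hk]

/-- Parallel strategy's joint reverse-time factorization: if the pair process `(X t, Y t)`
is a Markov chain conditionally on `C`, then the joint reverse trajectory, conditioned on
`C = c`, factorizes into per-timestep signal updates followed by logit updates conditioned
on the freshly updated signal. -/
theorem parallel_joint_reverse_factorization
    {Ω : Type*} [MeasurableSpace Ω] (μ : Measure Ω) [IsProbabilityMeasure μ]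
    {S_X S_Y S_C : Type*}
    [Countable S_X] [MeasurableSpace S_X] [MeasurableSingletonClass S_X]
    [Countable S_Y] [MeasurableSpace S_Y] [MeasurableSingletonClass S_Y]
    [Countable S_C] [MeasurableSpace S_C] [MeasurableSingletonClass S_C]
    (T : ℕ) (hT : 1 ≤ T)
    (X : ℕ → Ω → S_X) (Y : ℕ → Ω → S_Y) (C : Ω → S_C)
    (hX : ∀ k, Measurable (X k)) (hY : ∀ k, Measurable (Y k)) (hC : Measurable C)
    (hMarkov : ∀ t, t < T → ∀ (x : ℕ → S_X) (y : ℕ → S_Y) (c : S_C),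
      0 < μ ((⋂ k ∈ Finset.range (t + 1), ({ω | X k ω = x k} ∩ {ω | Y k ω = y k}))
              ∩ {ω | C ω = c}) →
      μ[|(⋂ k ∈ Finset.range (t + 1), ({ω | X k ω = x k} ∩ {ω | Y k ω = y k}))
          ∩ {ω | C ω = c}]
          ({ω | X (t + 1) ω = x (t + 1)} ∩ {ω | Y (t + 1) ω = y (t + 1)})
        = μ[|{ω | X t ω = x t} ∩ {ω | Y t ω = y t} ∩ {ω | C ω = c}]
            ({ω | X (t + 1) ω = x (t + 1)} ∩ {ω | Y (t + 1) ω = y (t + 1)})) :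
    ∀ (x : ℕ → S_X) (y : ℕ → S_Y) (c : S_C),
      0 < μ ((⋂ t ∈ Finset.range (T + 1), ({ω | X t ω = x t} ∩ {ω | Y t ω = y t}))
              ∩ {ω | C ω = c}) →
      μ[|{ω | X T ω = x T} ∩ {ω | Y T ω = y T} ∩ {ω | C ω = c}]
          (⋂ t ∈ Finset.range T, ({ω | X t ω = x t} ∩ {ω | Y t ω = y t}))
        = ∏ t ∈ Finset.Icc 1 T,
            (μ[|{ω | X t ω = x t} ∩ {ω | Y t ω = y t} ∩ {ω | C ω = c}]
                {ω | X (t - 1) ω = x (t - 1)}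
             * μ[|{ω | X (t - 1) ω = x (t - 1)} ∩ {ω | X t ω = x t}
                  ∩ {ω | Y t ω = y t} ∩ {ω | C ω = c}]
                {ω | Y (t - 1) ω = y (t - 1)}) := by
  intro x y c hpos
  have hAm : ∀ t, MeasurableSet ({ω | X t ω = x t} ∩ {ω | Y t ω = y t}) := fun t =>
    (hX t (measurableSet_singleton (x t))).inter (hY t (measurableSet_singleton (y t)))
  have hEcm : MeasurableSet {ω | C ω = c} := hC (measurableSet_singleton c)
  have main : μ[|{ω | X T ω = x T} ∩ {ω | Y T ω = y T} ∩ {ω | C ω = c}]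
          (⋂ t ∈ Finset.range T, ({ω | X t ω = x t} ∩ {ω | Y t ω = y t}))
        = ∏ t ∈ Finset.Icc 1 T,
            μ[|{ω | X t ω = x t} ∩ {ω | Y t ω = y t} ∩ {ω | C ω = c}]
              ({ω | X (t - 1) ω = x (t - 1)} ∩ {ω | Y (t - 1) ω = y (t - 1)}) :=
    reverse_chain_aux μ T (fun t => {ω | X t ω = x t} ∩ {ω | Y t ω = y t}) {ω | C ω = c}
      hAm hEcm (fun t ht => hMarkov t ht x y c) hpos
  refine main.trans (Finset.prod_congr rfl fun t ht => ?_)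
  obtain ⟨ht1, ht2⟩ := Finset.mem_Icc.mp ht
  have hs2m : MeasurableSet ({ω | X (t - 1) ω = x (t - 1)} ∩ {ω | X t ω = x t}
      ∩ {ω | Y t ω = y t} ∩ {ω | C ω = c}) :=
    (((hX (t - 1) (measurableSet_singleton (x (t - 1)))).inter
      (hX t (measurableSet_singleton (x t)))).inter
      (hY t (measurableSet_singleton (y t)))).inter hEcm
  have hsub : (⋂ k ∈ Finset.range (T + 1), ({ω | X k ω = x k} ∩ {ω | Y k ω = y k}))
      ∩ {ω | C ω = c} ⊆ {ω | X (t - 1) ω = x (t - 1)} ∩ {ω | X t ω = x t}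
      ∩ {ω | Y t ω = y t} ∩ {ω | C ω = c} := by
    intro ω hω
    simp only [Set.mem_inter_iff, Set.mem_iInter, Finset.mem_range, Set.mem_setOf_eq] at hω ⊢
    obtain ⟨h1, h2⟩ := hω
    exact ⟨⟨⟨(h1 (t - 1) (by omega)).1, (h1 t (by omega)).1⟩, (h1 t (by omega)).2⟩, h2⟩
  have hs2pos : 0 < μ ({ω | X (t - 1) ω = x (t - 1)} ∩ {ω | X t ω = x t}
      ∩ {ω | Y t ω = y t} ∩ {ω | C ω = c}) := lt_of_lt_of_le hpos (measure_mono hsub)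
  have e1 : {ω | X t ω = x t} ∩ {ω | Y t ω = y t} ∩ {ω | C ω = c}
      ∩ {ω | X (t - 1) ω = x (t - 1)}
      = {ω | X (t - 1) ω = x (t - 1)} ∩ {ω | X t ω = x t}
        ∩ {ω | Y t ω = y t} ∩ {ω | C ω = c} := by
    ext ω
    simp only [Set.mem_inter_iff]
    tauto
  have e2 : {ω | X (t - 1) ω = x (t - 1)} ∩ {ω | X t ω = x t} ∩ {ω | Y t ω = y t}
      ∩ {ω | C ω = c} ∩ {ω | Y (t - 1) ω = y (t - 1)}
      = {ω | X t ω = x t} ∩ {ω | Y t ω = y t} ∩ {ω | C ω = c}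
        ∩ ({ω | X (t - 1) ω = x (t - 1)} ∩ {ω | Y (t - 1) ω = y (t - 1)}) := by
    ext ω
    simp only [Set.mem_inter_iff]
    tauto
  rw [cond_apply ((hAm t).inter hEcm), cond_apply ((hAm t).inter hEcm), cond_apply hs2m,
    e1, e2]
  have hcancel : ∀ (u v w : ENNReal), v ≠ 0 → v ≠ ⊤ → u * v * (v⁻¹ * w) = u * w := by
    intro u v w h0 htop
    rw [mul_assoc, ← mul_assoc v, ENNReal.mul_inv_cancel h0 htop, one_mul]
  exact (hcancel _ _ _ hs2pos.ne' (measure_ne_top _ _)).symm
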